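/- Vandermonde simplex containment for PhD motion prediction. Let n ≥ 1, λ₁, …, λ_n < 0 be real numbers, and let c₀, …, c_{n−1} ∈ ℝ be determined by ∏_{k=1}^n (X − λ_k) = X^n + Σ_{k=0}^{n−1} c_k X^k. Let λ' be the list λ₁, …, λ_n with one occurrence of a maximal element removed, and let c'₀, …, c'_{n−1} be determined by ∏_{λ ∈ λ'} (X − λ) = Σ_{k=0}^{n−1} c'_k X^k (so c'_{n−1} = 1). Let g ∈ ℝ^d and let x : ℝ → ℝ^d be an n-times continuously differentiable function satisfying x^{(n)}(t) = −Σ_{k=1}^{n−1} c_k·x^{(k)}(t) − c₀·(x(t) − g) for all t ≥ 0. Then for all t ≥ 0, x(t) lies in the convex hull of the finite set {g} ∪ { Σ_{k=0}^m (c'_k/c'_0)·x^{(k)}(0) : 0 ≤ m ≤ n−1 }. -/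

import Mathlib

open Polynomial Pointwise

section Aux
variable {E : Type*} [NormedAddCommGroup E] [NormedSpace ℝ E]

noncomputable def PP (L : List ℝ) : ℝ[X] := (L.map (fun a => X - C a)).prod
lemma PP_nil : PP ([] : List ℝ) = 1 := rfl
lemma PP_cons (a : ℝ) (T : List ℝ) : PP (a :: T) = (X - C a) * PP T := by simp [PP]

lemma PP_monic (L : List ℝ) : (PP L).Monic := by
  induction L with
  | nil => exact monic_one
  | cons a T ih => rw [PP_cons]; exact (monic_X_sub_C a).mul ih

lemma PP_natDegree (L : List ℝ) : (PP L).natDegree = L.length := by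
  induction L with
  | nil => simp [PP_nil]
  | cons a T ih =>
    rw [PP_cons, (monic_X_sub_C a).natDegree_mul (PP_monic T)]
    simp [ih, natDegree_X_sub_C]; omega

lemma coeff_X_sub_C_mul (a : ℝ) (Q : ℝ[X]) (k : ℕ) :
    ((X - C a) * Q).coeff (k+1) = Q.coeff k - a * Q.coeff (k+1) := by
  rw [sub_mul, X_mul, coeff_sub, coeff_mul_X, coeff_C_mul]

lemma coeff_X_sub_C_mul_zero (a : ℝ) (Q : ℝ[X]) :
    ((X - C a) * Q).coeff 0 = - (a * Q.coeff 0) := by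
  rw [sub_mul, coeff_sub, mul_coeff_zero, coeff_X_zero, coeff_C_mul, zero_mul, zero_sub]

lemma PP_coeff_nonneg (L : List ℝ) (hL : ∀ a ∈ L, a < 0) (k : ℕ) : 0 ≤ (PP L).coeff k := by
  induction L generalizing k with
  | nil => rw [PP_nil]; rcases k with _ | k <;> simp [coeff_one]
  | cons a T ih =>
    have ha : a < 0 := hL a (List.mem_cons_self)
    have hT : ∀ b ∈ T, b < 0 := fun b hb => hL b (List.mem_cons_of_mem a hb)
    rcases k with _ | k
    · rw [PP_cons, coeff_X_sub_C_mul_zero]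
      nlinarith [ih hT 0]
    · rw [PP_cons, _root_.coeff_X_sub_C_mul]
      nlinarith [ih hT k, ih hT (k+1)]

lemma PP_coeff_pos (L : List ℝ) (hL : ∀ a ∈ L, a < 0) (k : ℕ) (hk : k ≤ L.length) :
    0 < (PP L).coeff k := by
  induction L generalizing k with
  | nil =>
    simp only [List.length_nil, Nat.le_zero] at hk
    subst hk; simp [PP_nil]
  | cons a T ih =>
    have ha : a < 0 := hL a (List.mem_cons_self)
    have hT : ∀ b ∈ T, b < 0 := fun b hb => hL b (List.mem_cons_of_mem a hb)
    rcases k with _ | k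
    · rw [PP_cons, coeff_X_sub_C_mul_zero]
      nlinarith [ih hT 0 (Nat.zero_le _)]
    · rw [PP_cons, _root_.coeff_X_sub_C_mul]
      have hk' : k ≤ T.length := by simpa using hk
      nlinarith [ih hT k hk', PP_coeff_nonneg T hT (k+1)]

lemma iteratedDeriv_step {e : ℝ → E} {N k : ℕ} (he : ContDiff ℝ ((N:ℕ∞)+1) e) (μ : ℝ)
    (hk : k ≤ N) (t : ℝ) :
    iteratedDeriv k (fun s => deriv e s - μ • e s) t
      = iteratedDeriv (k+1) e t - μ • iteratedDeriv k e t := by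
  have hd : ContDiff ℝ (N:ℕ∞) (deriv e) := (contDiff_succ_iff_deriv.mp he).2.2
  have hdk : ContDiff ℝ (k:ℕ∞) (deriv e) := hd.of_le (by exact_mod_cast hk)
  have hek : ContDiff ℝ (k:ℕ∞) e := he.of_le (le_trans (by exact_mod_cast hk) le_self_add)
  have hfun : (fun s => deriv e s - μ • e s) = deriv e + (-μ) • e := by
    funext s; simp [sub_eq_add_neg]
  have h1 : iteratedDeriv k (fun s => deriv e s - μ • e s) t
      = iteratedDeriv k (deriv e) t + (-μ) • iteratedDeriv k e t := by
    rw [hfun, iteratedDeriv_eq_iteratedFDeriv, iteratedDeriv_eq_iteratedFDeriv,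
      iteratedDeriv_eq_iteratedFDeriv]
    have ha := iteratedFDeriv_add_apply (𝕜 := ℝ) (f := deriv e) (g := (-μ) • e)
      hdk.contDiffAt (hek.const_smul (-μ)).contDiffAt (x := t)
    have hs := iteratedFDeriv_const_smul_apply (𝕜 := ℝ) (f := e) (a := -μ) (x := t) hek.contDiffAt
    rw [ha, hs]
    simp
  rw [h1, ← iteratedDeriv_succ']
  module

lemma ode_transfer {e : ℝ → E} {N : ℕ} (he : ContDiff ℝ ((N:ℕ∞)+1) e) (μ : ℝ) (Q : ℝ[X])
    (hQ : Q.natDegree ≤ N) (t : ℝ) :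
    ∑ k ∈ Finset.range (N+2), ((X - C μ) * Q).coeff k • iteratedDeriv k e t
      = ∑ k ∈ Finset.range (N+1), Q.coeff k • iteratedDeriv k (fun s => deriv e s - μ • e s) t := by
  have hstep : ∀ k ∈ Finset.range (N+1), Q.coeff k • iteratedDeriv k (fun s => deriv e s - μ • e s) t
      = Q.coeff k • iteratedDeriv (k+1) e t - (μ * Q.coeff k) • iteratedDeriv k e t := by
    intro k hk
    rw [iteratedDeriv_step he μ (Nat.lt_succ_iff.mp (Finset.mem_range.mp hk)) t]
    rw [smul_sub, smul_smul, mul_comm]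
  rw [Finset.sum_congr rfl hstep, Finset.sum_sub_distrib]
  have hpeel := Finset.sum_range_succ' (fun k => ((X - C μ) * Q).coeff k • iteratedDeriv k e t) (N+1)
  rw [show N+1+1 = N+2 from rfl] at hpeel
  rw [hpeel]
  have h0 : ((X - C μ) * Q).coeff 0 • iteratedDeriv 0 e t = -((μ * Q.coeff 0) • iteratedDeriv 0 e t) := by
    rw [coeff_X_sub_C_mul_zero, neg_smul]
  have hsucc : ∀ k, ((X - C μ) * Q).coeff (k+1) • iteratedDeriv (k+1) e t
      = Q.coeff k • iteratedDeriv (k+1) e t - (μ * Q.coeff (k+1)) • iteratedDeriv (k+1) e t := by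
    intro k; rw [coeff_X_sub_C_mul, sub_smul]
  rw [h0, Finset.sum_congr rfl (fun k _ => hsucc k), Finset.sum_sub_distrib]
  have hlast : ∑ k ∈ Finset.range (N+1), (μ * Q.coeff (k+1)) • iteratedDeriv (k+1) e t
      = ∑ k ∈ Finset.range N, (μ * Q.coeff (k+1)) • iteratedDeriv (k+1) e t := by
    rw [Finset.sum_range_succ, coeff_eq_zero_of_natDegree_lt (lt_of_le_of_lt hQ (Nat.lt_succ_self N)),
      mul_zero, zero_smul, add_zero]
  have hshift : ∑ k ∈ Finset.range (N+1), (μ * Q.coeff k) • iteratedDeriv k e t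
      = ∑ k ∈ Finset.range N, (μ * Q.coeff (k+1)) • iteratedDeriv (k+1) e t
        + (μ * Q.coeff 0) • iteratedDeriv 0 e t :=
    Finset.sum_range_succ' (fun k => (μ * Q.coeff k) • iteratedDeriv k e t) N
  rw [hlast, hshift]
  abel

noncomputable def W (p' : ℝ[X]) (e : ℝ → E) (m : ℕ) : E :=
  ∑ k ∈ Finset.range (m+1), (p'.coeff k / p'.coeff 0) • iteratedDeriv k e 0

lemma W_succ (p' : ℝ[X]) (e : ℝ → E) (m : ℕ) :
    W p' e (m+1) = W p' e m + (p'.coeff (m+1) / p'.coeff 0) • iteratedDeriv (m+1) e 0 :=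
  Finset.sum_range_succ _ _

lemma W_zero (p' : ℝ[X]) (e : ℝ → E) (h : p'.coeff 0 ≠ 0) : W p' e 0 = e 0 := by
  simp [W, div_self h]

lemma vertex_id (μ : ℝ) (hμ : μ < 0) (q : ℝ[X]) (hq0 : 0 < q.coeff 0) {e : ℝ → E} {N : ℕ}
    (he : ContDiff ℝ ((N:ℕ∞)+1) e) (m : ℕ) (hm : m ≤ N) :
    (-μ)⁻¹ • W q (fun s => deriv e s - μ • e s) m
      = W ((X - C μ) * q) e m
        + (q.coeff m / ((X - C μ) * q).coeff 0) • iteratedDeriv (m+1) e 0 := by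
  have hμ0 : μ ≠ 0 := hμ.ne
  have hq0' : q.coeff 0 ≠ 0 := hq0.ne'
  have hp0 : ((X - C μ) * q).coeff 0 = -(μ * q.coeff 0) := coeff_X_sub_C_mul_zero μ q
  have hp0pos : 0 < ((X - C μ) * q).coeff 0 := by rw [hp0]; nlinarith
  have hp0' : ((X - C μ) * q).coeff 0 ≠ 0 := hp0pos.ne'
  induction m with
  | zero =>
    rw [W_zero q _ hq0', W_zero ((X - C μ) * q) e hp0']
    have h0 : iteratedDeriv 0 (fun s => deriv e s - μ • e s) 0
        = iteratedDeriv 1 e 0 - μ • iteratedDeriv 0 e 0 := iteratedDeriv_step he μ (Nat.zero_le N) 0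
    simp only [iteratedDeriv_zero] at h0 ⊢
    rw [h0, hp0]
    norm_num
    match_scalars <;> field_simp
  | succ m ih =>
    have hmN : m ≤ N := (Nat.le_succ m).trans hm
    rw [W_succ, W_succ, smul_add, ih hmN, iteratedDeriv_step he μ hm 0,
      coeff_X_sub_C_mul μ q m, hp0]
    match_scalars <;> field_simp <;> ring

theorem invariance {K : Set E} (hK : Convex ℝ K) (hKc : IsClosed K)
    {μ : ℝ} (hμ : μ < 0) {e f : ℝ → E} (he : Differentiable ℝ e)
    (hder : ∀ t : ℝ, 0 ≤ t → deriv e t = μ • (e t - f t))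
    (hf : ∀ t : ℝ, 0 ≤ t → f t ∈ K) (h0 : e 0 ∈ K) :
    ∀ t : ℝ, 0 ≤ t → e t ∈ K := by
  intro t ht
  by_contra hout
  obtain ⟨ℓ, u, hsep, hu⟩ := geometric_hahn_banach_closed_point hK hKc hout
  set ψ : ℝ → ℝ := fun s => ℓ (e s) with hψdef
  have hψ : ∀ s : ℝ, HasDerivAt ψ (ℓ (deriv e s)) s := fun s =>
    ℓ.hasFDerivAt.comp_hasDerivAt s (he s).hasDerivAt
  set φ : ℝ → ℝ := fun s => Real.exp (-μ * s) * (ψ s - u) with hφdef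
  have hφ : ∀ s : ℝ, HasDerivAt φ
      (Real.exp (-μ * s) * (-μ) * (ψ s - u) + Real.exp (-μ * s) * ℓ (deriv e s)) s := by
    intro s
    have h1 : HasDerivAt (fun s : ℝ => Real.exp (-μ * s)) (Real.exp (-μ * s) * (-μ)) s := by
      simpa using ((hasDerivAt_id s).const_mul (-μ)).exp
    exact h1.mul ((hψ s).sub_const u)
  have hmono : AntitoneOn φ (Set.Ici (0 : ℝ)) := by
    apply antitoneOn_of_deriv_nonpos (convex_Ici 0)
    · exact fun s _ => (hφ s).continuousAt.continuousWithinAt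
    · exact fun s _ => (hφ s).differentiableAt.differentiableWithinAt
    · intro s hs
      rw [interior_Ici] at hs
      rw [(hφ s).deriv, hder s hs.le]
      have hfs : ℓ (f s) < u := hsep _ (hf s hs.le)
      have : ℓ (μ • (e s - f s)) = μ * (ψ s - ℓ (f s)) := by
        simp [hψdef, map_smul, map_sub, mul_sub]
      rw [this]
      have hexp : (0:ℝ) < Real.exp (-μ * s) := Real.exp_pos _
      have : Real.exp (-μ * s) * (-μ) * (ψ s - u) + Real.exp (-μ * s) * (μ * (ψ s - ℓ (f s)))
          = Real.exp (-μ * s) * (μ * (u - ℓ (f s))) := by ring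
      rw [this]
      have : μ * (u - ℓ (f s)) ≤ 0 :=
        mul_nonpos_of_nonpos_of_nonneg hμ.le (by linarith)
      exact mul_nonpos_of_nonneg_of_nonpos hexp.le this
  have hφ0 : φ 0 ≤ 0 := by
    have : ψ 0 < u := hsep _ h0
    simp only [hφdef, mul_zero, neg_zero, Real.exp_zero, one_mul]
    · nlinarith [this]
  have hφt : φ t ≤ 0 := le_trans (hmono Set.self_mem_Ici ht ht) hφ0
  have hexp : (0:ℝ) < Real.exp (-μ * t) := Real.exp_pos _
  have hφt' : Real.exp (-μ * t) * (ψ t - u) ≤ 0 := hφt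
  have hψtu : ψ t - u ≤ 0 := by nlinarith [hφt', hexp]
  exact absurd hu (by simpa [hψdef] using not_lt.2 (by linarith))

theorem main_lemma (L : List ℝ) (M : ℝ) (hM : M < 0) (hL : ∀ a ∈ L, a < 0)
    (e : ℝ → E) (he : ContDiff ℝ (((L.length + 1 : ℕ)):ℕ∞) e)
    (hode : ∀ t : ℝ, 0 ≤ t → ∑ k ∈ Finset.range (L.length + 2),
        ((X - C M) * PP L).coeff k • iteratedDeriv k e t = 0) :
    ∀ t : ℝ, 0 ≤ t →
      e t ∈ convexHull ℝ (insert 0 (Set.range (fun m : Fin (L.length + 1) => W (PP L) e m))) := by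
  induction L generalizing e with
  | nil =>
    have hfin : (insert (0:E) (Set.range (fun m : Fin 1 => W (PP []) e m))).Finite :=
      (Set.finite_range _).insert 0
    have hPP0 : (PP []).coeff 0 = 1 := by simp [PP_nil, coeff_one]
    have he1 : Differentiable ℝ e := he.differentiable (by simp)
    refine invariance (convex_convexHull ℝ _) (hfin.isClosed_convexHull (𝕜 := ℝ)) hM he1
      (f := fun _ => 0) ?_ (fun s hs => ?_) ?_
    · intro s hs
      have h := hode s hs
      simp only [List.length_nil, zero_add, Finset.sum_range_succ, Finset.sum_range_zero] at h
      have hc0 : ((X - C M) * PP []).coeff 0 = -M := by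
        rw [coeff_X_sub_C_mul_zero, hPP0]; ring
      have hc1 : ((X - C M) * PP []).coeff 1 = 1 := by
        rw [show (1:ℕ) = 0 + 1 from rfl, _root_.coeff_X_sub_C_mul, hPP0]
        have : (PP ([]:List ℝ)).coeff 1 = 0 :=
          coeff_eq_zero_of_natDegree_lt (by rw [PP_natDegree]; norm_num)
        rw [this]; ring
      rw [hc0, hc1, iteratedDeriv_zero, iteratedDeriv_one, one_smul] at h
      have hde : deriv e s = M • e s := by
        rw [neg_smul] at h; linear_combination (norm := module) h
      rw [hde]; simp
    · exact subset_convexHull ℝ _ (Set.mem_insert 0 _)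
    · apply subset_convexHull ℝ _
      refine Set.mem_insert_iff.mpr (Or.inr ⟨(0 : Fin 1), ?_⟩)
      exact W_zero _ _ (by rw [hPP0]; norm_num)
  | cons μ T ih =>
    have hμ : μ < 0 := hL μ (List.mem_cons_self)
    have hT : ∀ a ∈ T, a < 0 := fun a ha => hL a (List.mem_cons_of_mem μ ha)
    have hμ0 : μ ≠ 0 := hμ.ne
    have heN : ContDiff ℝ (((T.length + 1 : ℕ):ℕ∞) + 1) e := by
      simp only [List.length_cons] at he
      exact_mod_cast he
    set eh : ℝ → E := fun s => deriv e s - μ • e s with hehdef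
    have hderiv : ContDiff ℝ ((T.length + 1 : ℕ):ℕ∞) (deriv e) :=
      (contDiff_succ_iff_deriv.mp heN).2.2
    have hee : ContDiff ℝ ((T.length + 1 : ℕ):ℕ∞) e := heN.of_le le_self_add
    have heh : ContDiff ℝ ((T.length + 1 : ℕ):ℕ∞) eh := hderiv.sub (hee.const_smul μ)
    -- the ODE for eh
    have hodeeh : ∀ s : ℝ, 0 ≤ s → ∑ k ∈ Finset.range (T.length + 2),
        ((X - C M) * PP T).coeff k • iteratedDeriv k eh s = 0 := by
      intro s hs
      have h := hode s hs
      have hcomm : (X - C M) * PP (μ :: T) = (X - C μ) * ((X - C M) * PP T) := by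
        rw [PP_cons]; ring
      rw [hcomm] at h
      have hdeg : ((X - C M) * PP T).natDegree ≤ T.length + 1 := by
        rw [(monic_X_sub_C M).natDegree_mul (PP_monic T), natDegree_X_sub_C, PP_natDegree]
        omega
      have htr := ode_transfer (N := T.length + 1) (by exact_mod_cast heN) μ
        ((X - C M) * PP T) hdeg s
      rw [show T.length + 1 + 2 = (μ :: T).length + 2 from by simp [List.length_cons]] at htr
      rw [← htr]
      exact h
    have hmem : ∀ s : ℝ, 0 ≤ s → eh s ∈ convexHull ℝ
        (insert 0 (Set.range (fun m : Fin (T.length + 1) => W (PP T) eh m))) :=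
      ih hT eh heh hodeeh
    -- the big simplex
    set K := convexHull ℝ (insert (0:E)
      (Set.range (fun m : Fin ((μ :: T).length + 1) => W (PP (μ :: T)) e m))) with hKdef
    have hfin : (insert (0:E)
        (Set.range (fun m : Fin ((μ :: T).length + 1) => W (PP (μ :: T)) e m))).Finite :=
      (Set.finite_range _).insert 0
    have hKconv : Convex ℝ K := convex_convexHull ℝ _
    have hKcl : IsClosed K := hfin.isClosed_convexHull (𝕜 := ℝ)
    -- coefficient facts
    have hq0 : 0 < (PP T).coeff 0 := PP_coeff_pos T hT 0 (Nat.zero_le _)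
    have hp0 : 0 < (PP (μ :: T)).coeff 0 := PP_coeff_pos _ hL 0 (Nat.zero_le _)
    have hp0' : (PP (μ :: T)).coeff 0 ≠ 0 := hp0.ne'
    -- scaled inner vertices lie in K
    have hvert : ∀ m : Fin (T.length + 1), (-μ)⁻¹ • W (PP T) eh m ∈ K := by
      intro m
      have hm : (m : ℕ) ≤ T.length + 1 := le_of_lt (lt_of_lt_of_le m.isLt (by omega))
      have hv := vertex_id μ hμ (PP T) hq0 (e := e) (N := T.length + 1) heN m hm
      rw [← PP_cons] at hv
      set θ : ℝ := (PP T).coeff m / (PP (μ :: T)).coeff (m+1) with hθdef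
      have hpm1 : 0 < (PP (μ :: T)).coeff (m+1) :=
        PP_coeff_pos _ hL (m+1) (by have := m.isLt; simp only [List.length_cons]; omega)
      have hθ0 : 0 ≤ θ := div_nonneg (PP_coeff_nonneg T hT m) hpm1.le
      have hθ1 : θ ≤ 1 := by
        rw [hθdef, div_le_one hpm1, PP_cons, _root_.coeff_X_sub_C_mul]
        nlinarith [PP_coeff_nonneg T hT ((m:ℕ)+1), PP_coeff_nonneg T hT (m:ℕ)]
      have hcomb : (-μ)⁻¹ • W (PP T) eh m
          = (1 - θ) • W (PP (μ :: T)) e m + θ • W (PP (μ :: T)) e ((m:ℕ)+1) := by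
        rw [hv, W_succ]
        have hpm1' : (PP (μ :: T)).coeff ((m:ℕ)+1) ≠ 0 := hpm1.ne'
        match_scalars
        · ring
        · rw [hθdef]; field_simp
      rw [hcomb]
      have h1 : W (PP (μ :: T)) e m ∈ K := by
        apply subset_convexHull ℝ _
        refine Set.mem_insert_iff.mpr (Or.inr ⟨⟨(m:ℕ), by have := m.isLt; simp only [List.length_cons]; omega⟩, rfl⟩)
      have h2 : W (PP (μ :: T)) e ((m:ℕ)+1) ∈ K := by
        apply subset_convexHull ℝ _
        refine Set.mem_insert_iff.mpr (Or.inr ⟨⟨(m:ℕ)+1, by have := m.isLt; simp only [List.length_cons]; omega⟩, rfl⟩)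
      exact hKconv h1 h2 (by linarith) hθ0 (by ring)
    -- f stays in K
    set f : ℝ → E := fun s => (-μ)⁻¹ • eh s with hfdef
    have hfK : ∀ s : ℝ, 0 ≤ s → f s ∈ K := by
      intro s hs
      have h1 : f s ∈ (-μ)⁻¹ • convexHull ℝ
          (insert 0 (Set.range (fun m : Fin (T.length + 1) => W (PP T) eh m))) :=
        Set.smul_mem_smul_set (hmem s hs)
      rw [← convexHull_smul] at h1
      refine convexHull_min ?_ hKconv h1
      intro y hy
      obtain ⟨z, hz, rfl⟩ := hy
      rcases Set.mem_insert_iff.mp hz with h | h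
      · show ((-μ)⁻¹ • z) ∈ K
        rw [h, smul_zero]
        exact subset_convexHull ℝ _ (Set.mem_insert 0 _)
      · obtain ⟨m, rfl⟩ := h
        exact hvert m
    -- invariance
    have he1 : Differentiable ℝ e := by
      apply heN.differentiable
      simp
    have hder : ∀ s : ℝ, 0 ≤ s → deriv e s = μ • (e s - f s) := by
      intro s _
      have hms : μ • ((-μ)⁻¹ • eh s) = -eh s := by
        rw [smul_smul, show μ * (-μ)⁻¹ = -1 from by field_simp, neg_one_smul]
      rw [hfdef]
      show deriv e s = μ • (e s - (-μ)⁻¹ • eh s)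
      rw [smul_sub, hms, hehdef]
      show deriv e s = μ • e s - -(deriv e s - μ • e s)
      module
    have h0 : e 0 ∈ K := by
      apply subset_convexHull ℝ _
      refine Set.mem_insert_iff.mpr (Or.inr ⟨⟨0, by simp⟩, ?_⟩)
      exact W_zero _ _ hp0'
    exact invariance hKconv hKcl hμ he1 hder hfK h0

theorem main_lemma' (n : ℕ) (L : List ℝ) (hlen : L.length + 1 = n) (M : ℝ) (hM : M < 0)
    (hL : ∀ a ∈ L, a < 0) (e : ℝ → E) (he : ContDiff ℝ (n:ℕ∞) e)
    (hode : ∀ t : ℝ, 0 ≤ t → ∑ k ∈ Finset.range (n+1),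
        ((X - C M) * PP L).coeff k • iteratedDeriv k e t = 0) :
    ∀ t : ℝ, 0 ≤ t → e t ∈ convexHull ℝ (insert 0 (Set.range (fun m : Fin n =>
      ∑ k ∈ Finset.range ((m:ℕ)+1), ((PP L).coeff k / (PP L).coeff 0) • iteratedDeriv k e 0))) := by
  subst hlen
  exact main_lemma L M hM hL e he hode

end Aux

theorem phd_vandermonde_simplex_containment {d n : ℕ} (hn : 1 ≤ n)
    (lam : Fin n → ℝ) (hlam : ∀ k, lam k < 0)
    (c c' : ℕ → ℝ)
    (hc : ∏ k : Fin n, (X - C (lam k)) =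
      X ^ n + ∑ k ∈ Finset.range n, C (c k) * X ^ k)
    (j : Fin n) (hj : ∀ k, lam k ≤ lam j)
    (hc' : ∏ k ∈ Finset.univ.erase j, (X - C (lam k)) =
      ∑ k ∈ Finset.range n, C (c' k) * X ^ k)
    (g : EuclideanSpace ℝ (Fin d)) (x : ℝ → EuclideanSpace ℝ (Fin d))
    (hx : ContDiff ℝ (n : ℕ∞) x)
    (hode : ∀ t : ℝ, 0 ≤ t →
      iteratedDeriv n x t =
        -(∑ k ∈ Finset.Ico 1 n, c k • iteratedDeriv k x t) - c 0 • (x t - g)) :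
    ∀ t : ℝ, 0 ≤ t →
      x t ∈ convexHull ℝ (insert g (Set.range fun m : Fin n =>
        ∑ k ∈ Finset.range ((m : ℕ) + 1), (c' k / c' 0) • iteratedDeriv k x 0)) := by
  set L : List ℝ := (Finset.univ.erase j).toList.map lam with hLdef
  have hPPL : PP L = ∏ k ∈ Finset.univ.erase j, (X - C (lam k)) := by
    rw [PP, hLdef, List.map_map]
    exact Finset.prod_map_toList _ _
  have hlen : L.length + 1 = n := by
    rw [hLdef, List.length_map, Finset.length_toList,
      Finset.card_erase_of_mem (Finset.mem_univ j), Finset.card_univ, Fintype.card_fin]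
    omega
  have hLneg : ∀ a ∈ L, a < 0 := by
    intro a ha
    rw [hLdef] at ha
    obtain ⟨k, _, rfl⟩ := List.mem_map.mp ha
    exact hlam k
  have hcoeff : ∀ k, k < n → (PP L).coeff k = c' k := by
    intro k hk
    rw [hPPL, hc', finset_sum_coeff]
    simp only [coeff_C_mul, coeff_X_pow, mul_ite, mul_one, mul_zero]
    rw [Finset.sum_ite_eq (Finset.range n) k (fun i => c' i)]
    simp [Finset.mem_range.mpr hk]
  have hPP0pos : 0 < (PP L).coeff 0 := PP_coeff_pos L hLneg 0 (Nat.zero_le _)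
  have hc'0 : c' 0 ≠ 0 := by rw [← hcoeff 0 (by omega)]; exact hPP0pos.ne'
  have hfull : (X - C (lam j)) * PP L = X ^ n + ∑ k ∈ Finset.range n, C (c k) * X ^ k := by
    rw [hPPL]
    exact (Finset.mul_prod_erase Finset.univ _ (Finset.mem_univ j)).trans hc
  have hQk : ∀ k, k < n → ((X - C (lam j)) * PP L).coeff k = c k := by
    intro k hk
    rw [hfull, coeff_add, coeff_X_pow, if_neg (by omega), finset_sum_coeff]
    simp only [coeff_C_mul, coeff_X_pow, mul_ite, mul_one, mul_zero]
    rw [Finset.sum_ite_eq (Finset.range n) k (fun i => c i)]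
    simp [Finset.mem_range.mpr hk]
  have hQn : ((X - C (lam j)) * PP L).coeff n = 1 := by
    rw [hfull, coeff_add, coeff_X_pow, if_pos rfl, finset_sum_coeff]
    simp only [coeff_C_mul, coeff_X_pow, mul_ite, mul_one, mul_zero]
    rw [Finset.sum_ite_eq (Finset.range n) n (fun i => c i)]
    simp
  set e : ℝ → EuclideanSpace ℝ (Fin d) := fun t => x t - g with hedef
  have he : ContDiff ℝ (n:ℕ∞) e := hx.sub contDiff_const
  have hderiv_e : deriv e = deriv x := by
    funext s; exact deriv_sub_const g
  have hiter : ∀ k : ℕ, 1 ≤ k → iteratedDeriv k e = iteratedDeriv k x := by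
    intro k hk
    cases k with
    | zero => omega
    | succ k' => rw [iteratedDeriv_succ', iteratedDeriv_succ', hderiv_e]
  have hodeL : ∀ t : ℝ, 0 ≤ t → ∑ k ∈ Finset.range (n+1),
      ((X - C (lam j)) * PP L).coeff k • iteratedDeriv k e t = 0 := by
    intro t ht
    rw [Finset.sum_range_succ]
    have hsplit : ∑ k ∈ Finset.range n, ((X - C (lam j)) * PP L).coeff k • iteratedDeriv k e t
        = c 0 • (x t - g) + ∑ k ∈ Finset.Ico 1 n, c k • iteratedDeriv k x t := by
      rw [Finset.range_eq_Ico, Finset.sum_eq_sum_Ico_succ_bot (by omega : (0:ℕ) < n)]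
      congr 1
      · rw [hQk 0 (by omega), iteratedDeriv_zero]
      · apply Finset.sum_congr rfl
        intro k hk
        obtain ⟨h1k, hkn⟩ := Finset.mem_Ico.mp hk
        rw [hQk k hkn, hiter k h1k]
    rw [hsplit, hQn, one_smul, hiter n hn, hode t ht]
    abel
  intro t ht
  have hmem := main_lemma' n L hlen (lam j) (hlam j) hLneg e he hodeL t ht
  have hvfun : ∀ m : Fin n,
      g + (∑ k ∈ Finset.range ((m:ℕ)+1), ((PP L).coeff k / (PP L).coeff 0) • iteratedDeriv k e 0)
      = ∑ k ∈ Finset.range ((m:ℕ)+1), (c' k / c' 0) • iteratedDeriv k x 0 := by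
    intro m
    have hm : (m:ℕ) < n := m.isLt
    rw [Finset.range_eq_Ico, Finset.sum_eq_sum_Ico_succ_bot (by omega : (0:ℕ) < (m:ℕ)+1),
      Finset.sum_eq_sum_Ico_succ_bot (by omega : (0:ℕ) < (m:ℕ)+1)]
    have hS : ∑ k ∈ Finset.Ico 1 ((m:ℕ)+1), ((PP L).coeff k / (PP L).coeff 0) • iteratedDeriv k e 0
        = ∑ k ∈ Finset.Ico 1 ((m:ℕ)+1), (c' k / c' 0) • iteratedDeriv k x 0 := by
      apply Finset.sum_congr rfl
      intro k hk
      obtain ⟨h1k, hkm⟩ := Finset.mem_Ico.mp hk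
      rw [hcoeff k (by omega), hcoeff 0 (by omega), hiter k h1k]
    rw [hS, hcoeff 0 (by omega), div_self hc'0, one_smul, one_smul, iteratedDeriv_zero,
      iteratedDeriv_zero]
    show g + (x 0 - g + _) = x 0 + _
    abel
  have hxt : x t = g +ᵥ e t := by
    show x t = g + (x t - g); abel
  rw [hxt]
  have h2 : g +ᵥ e t ∈ g +ᵥ convexHull ℝ (insert 0 (Set.range (fun m : Fin n =>
      ∑ k ∈ Finset.range ((m:ℕ)+1), ((PP L).coeff k / (PP L).coeff 0) • iteratedDeriv k e 0))) :=
    Set.vadd_mem_vadd_set hmem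
  rw [← convexHull_vadd] at h2
  have hsets : g +ᵥ (insert (0 : EuclideanSpace ℝ (Fin d)) (Set.range (fun m : Fin n =>
      ∑ k ∈ Finset.range ((m:ℕ)+1), ((PP L).coeff k / (PP L).coeff 0) • iteratedDeriv k e 0)))
      = insert g (Set.range fun m : Fin n =>
        ∑ k ∈ Finset.range ((m : ℕ) + 1), (c' k / c' 0) • iteratedDeriv k x 0) := by
    rw [← Set.image_vadd, Set.image_insert_eq, ← Set.range_comp]
    congr 1
    · simp [vadd_eq_add]
    · exact congrArg Set.range (funext fun m => by simpa [vadd_eq_add] using hvfun m)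
  rw [hsets] at h2
  exact h2
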